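/- Let M ∈ ℝ^{n×n} be symmetric positive definite, A ∈ ℝ^{n×n}, and let B ∈ ℝ^{m×n} have full row rank m. Then there exists τ₀ > 0 such that for all τ with 0 < τ < τ₀ the following holds: (1/τ)M + A and S_A := B((1/τ)M + A)⁻¹Bᵀ are invertible, and for the coefficient pair (ℰ, 𝒜) of the SIMPLE scheme, given in 4×4 block form (with block sizes n, m, n, m) by ℰ = [[(1/τ)M, 0, 0, 0], [0, 0, 0, 0], [I, ((1/τ)M + A)⁻¹Bᵀ, −I, 0], [0, −I, 0, I]] and 𝒜 = [[0, (1/τ)M + A, 0, Bᵀ], [−B, −S_A, 0, 0], [0, 0, 0, 0], [0, 0, 0, I]], there exist invertible matrices P, Q ∈ ℝ^{(2n+2m)×(2n+2m)} and a matrix J ∈ ℝ^{(2n+m)×(2n+m)} such that P ℰ Q = [[I_{2n+m}, 0], [0, 0]] and P 𝒜 Q = [[J, 0], [0, I_m]]. In other words, the difference-algebraic equation of the SIMPLE scheme has Kronecker index 1. -/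

import Mathlib

open Matrix

section Core
variable {n m : ℕ}
variable (W C Ci t : Matrix (Fin n) (Fin n) ℝ) (B : Matrix (Fin m) (Fin n) ℝ)
  (Si : Matrix (Fin m) (Fin m) ℝ)

/-- The row-operation matrix. -/
def Pcore : Matrix ((Fin n ⊕ Fin m) ⊕ (Fin n ⊕ Fin m)) ((Fin n ⊕ Fin m) ⊕ (Fin n ⊕ Fin m)) ℝ :=
  fromBlocks (fromBlocks t (t * Bᵀ * Si + t * Bᵀ * Si) 0 (-Si)) 0
    (fromBlocks t (t * Bᵀ * Si + t * Bᵀ * Si) 0 Si) (fromBlocks (-1) 0 0 1)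

/-- The column-operation matrix. -/
def Qcore : Matrix ((Fin n ⊕ Fin m) ⊕ (Fin n ⊕ Fin m)) ((Fin n ⊕ Fin m) ⊕ (Fin n ⊕ Fin m)) ℝ :=
  fromBlocks (fromBlocks 1 0 (-(Si * B)) 1) 0
    (fromBlocks (-(Ci * Bᵀ * (Si * B))) (Ci * Bᵀ) (-(Si * B)) 1) 1

lemma coreE (h1 : t * W = 1) :
    Pcore t B Si * (fromBlocks
        (fromBlocks W 0 0 0) (0 : Matrix (Fin n ⊕ Fin m) (Fin n ⊕ Fin m) ℝ)
        (fromBlocks 1 (Ci * Bᵀ) 0 (-1)) (fromBlocks (-1) 0 0 1)) * Qcore Ci B Si =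
      fromBlocks (fromBlocks 1 0 0 0) 0 0 (1 : Matrix (Fin n ⊕ Fin m) (Fin n ⊕ Fin m) ℝ) := by
  have h1n : ∀ x : Matrix (Fin n) (Fin n) ℝ, t * (W * x) = x := by
    intro x; rw [← Matrix.mul_assoc, h1, Matrix.one_mul]
  have h1m : ∀ x : Matrix (Fin n) (Fin m) ℝ, t * (W * x) = x := by
    intro x; rw [← Matrix.mul_assoc, h1, Matrix.one_mul]
  simp [Pcore, Qcore, fromBlocks_multiply, fromBlocks_inj, fromBlocks_add, ← fromBlocks_one,
    Matrix.mul_add, Matrix.add_mul, Matrix.mul_assoc, smul_mul_assoc, Matrix.smul_mul,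
    h1, h1n, h1m] <;> abel

section Rel
variable (h2 : C * Ci = 1) (h3 : Si * (B * Ci * Bᵀ) = 1)
include h2 in
lemma hKn : ∀ x : Matrix (Fin m) (Fin n) ℝ, C * (Ci * (Bᵀ * x)) = Bᵀ * x := by
  intro x; rw [← Matrix.mul_assoc, ← Matrix.mul_assoc, h2, Matrix.one_mul]
include h2 in
lemma hKm : ∀ x : Matrix (Fin m) (Fin m) ℝ, C * (Ci * (Bᵀ * x)) = Bᵀ * x := by
  intro x; rw [← Matrix.mul_assoc, ← Matrix.mul_assoc, h2, Matrix.one_mul]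
include h2 in
lemma hK0 : C * (Ci * Bᵀ) = Bᵀ := by rw [← Matrix.mul_assoc, h2, Matrix.one_mul]
include h3 in
lemma hS0 : Si * (B * (Ci * Bᵀ)) = 1 := by rw [← Matrix.mul_assoc B]; exact h3
include h3 in
lemma hSn : ∀ x : Matrix (Fin m) (Fin n) ℝ, Si * (B * (Ci * (Bᵀ * x))) = x := by
  intro x
  rw [← Matrix.mul_assoc Ci Bᵀ x, ← Matrix.mul_assoc B (Ci * Bᵀ) x,
    ← Matrix.mul_assoc Si (B * (Ci * Bᵀ)) x, hS0 Ci B Si h3, Matrix.one_mul]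
include h3 in
lemma hSm : ∀ x : Matrix (Fin m) (Fin m) ℝ, Si * (B * (Ci * (Bᵀ * x))) = x := by
  intro x
  rw [← Matrix.mul_assoc Ci Bᵀ x, ← Matrix.mul_assoc B (Ci * Bᵀ) x,
    ← Matrix.mul_assoc Si (B * (Ci * Bᵀ)) x, hS0 Ci B Si h3, Matrix.one_mul]
end Rel

lemma coreA (h2 : C * Ci = 1) (h3 : Si * (B * Ci * Bᵀ) = 1) :
    Pcore t B Si * (fromBlocks
        (fromBlocks 0 0 (-B) (-(B * Ci * Bᵀ)))
        (fromBlocks C Bᵀ 0 0)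
        (0 : Matrix (Fin n ⊕ Fin m) (Fin n ⊕ Fin m) ℝ) (fromBlocks 0 0 0 1)) * Qcore Ci B Si =
      fromBlocks
        (fromBlocks (-(t * Bᵀ * (Si * B)) - t * Bᵀ * (Si * B)) 0 0 1)
        (fromBlocks (t * C) (t * Bᵀ) 0 0)
        (fromBlocks (-(t * Bᵀ * (Si * B)) - t * Bᵀ * (Si * B)) 0 (-(Si * B)) 0)
        (fromBlocks (t * C) (t * Bᵀ) 0 1) := by
  simp [Pcore, Qcore, fromBlocks_multiply, fromBlocks_inj, fromBlocks_add,
    Matrix.mul_add, Matrix.add_mul, Matrix.mul_assoc, smul_mul_assoc, Matrix.smul_mul,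
    h2, hKn C Ci B h2, hKm C Ci B h2, hK0 C Ci B h2, hS0 Ci B Si h3, hSn Ci B Si h3,
    hSm Ci B Si h3, h3, Matrix.fromBlocks_zero]
  constructor <;> abel

lemma corePunit (h1 : t * W = 1) (h3 : Si * (B * Ci * Bᵀ) = 1) :
    IsUnit (Pcore t B Si) := by
  apply (Matrix.isUnit_iff_isUnit_det _).mpr
  apply Matrix.isUnit_det_of_right_inverse (B := fromBlocks
    (fromBlocks W (Bᵀ + Bᵀ) 0 (-(B * (Ci * Bᵀ)))) 0 1 (fromBlocks (-1) 0 0 1))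
  simp [Pcore, fromBlocks_multiply, fromBlocks_inj, fromBlocks_add, ← fromBlocks_one,
    Matrix.mul_add, Matrix.add_mul, Matrix.mul_assoc, smul_mul_assoc, Matrix.smul_mul,
    h1, hS0 Ci B Si h3, Matrix.fromBlocks_zero]

lemma coreQunit : IsUnit (Qcore Ci B Si) := by
  apply (Matrix.isUnit_iff_isUnit_det _).mpr
  apply Matrix.isUnit_det_of_right_inverse (B := fromBlocks
    (fromBlocks 1 0 (Si * B) 1) 0 (fromBlocks 0 (-(Ci * Bᵀ)) 0 (-1)) 1)
  simp [Qcore, fromBlocks_multiply, fromBlocks_inj, fromBlocks_add, ← fromBlocks_one,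
    Matrix.mul_add, Matrix.add_mul, Matrix.mul_assoc, smul_mul_assoc, Matrix.smul_mul] <;> abel

end Core

section Reindex
variable {n m : ℕ}

open Sum in
/-- Regroup the four blocks: blocks 1, 3, 4 together, block 2 separate. -/
def e0 : ((Fin n ⊕ Fin m) ⊕ (Fin n ⊕ Fin m)) ≃ ((Fin n ⊕ (Fin n ⊕ Fin m)) ⊕ Fin m) where
  toFun := Sum.elim (Sum.elim (inl ∘ inl) inr) (inl ∘ inr)
  invFun := Sum.elim (Sum.elim (inl ∘ inl) inr) (inl ∘ inr)
  left_inv := by rintro ((a | b) | x) <;> rfl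
  right_inv := by rintro ((a | x) | b) <;> rfl

/-- The full regrouping equivalence. -/
def eFull (f : (Fin n ⊕ (Fin n ⊕ Fin m)) ≃ Fin (2 * n + m)) :
    ((Fin n ⊕ Fin m) ⊕ (Fin n ⊕ Fin m)) ≃ (Fin (2 * n + m) ⊕ Fin m) :=
  (e0).trans (f.sumCongr (Equiv.refl (Fin m)))

@[simp] lemma e0_symm_a (a : Fin n) :
    (e0 (n := n) (m := m)).symm (Sum.inl (Sum.inl a)) = Sum.inl (Sum.inl a) := rfl
@[simp] lemma e0_symm_x (x : Fin n ⊕ Fin m) :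
    (e0 (n := n) (m := m)).symm (Sum.inl (Sum.inr x)) = Sum.inr x := rfl
@[simp] lemma e0_symm_b (b : Fin m) :
    (e0 (n := n) (m := m)).symm (Sum.inr b) = Sum.inl (Sum.inr b) := rfl

lemma reindex_eFull (f : (Fin n ⊕ (Fin n ⊕ Fin m)) ≃ Fin (2 * n + m))
    (y11 y13 : Matrix (Fin n) (Fin n) ℝ) (y14 : Matrix (Fin n) (Fin m) ℝ)
    (y31 y33 : Matrix (Fin n) (Fin n) ℝ) (y34 : Matrix (Fin n) (Fin m) ℝ)
    (y41 y43 : Matrix (Fin m) (Fin n) ℝ) (y44 d : Matrix (Fin m) (Fin m) ℝ) :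
    reindex (eFull f) (eFull f)
      (fromBlocks (fromBlocks y11 0 0 d) (fromBlocks y13 y14 0 0)
        (fromBlocks y31 0 y41 0) (fromBlocks y33 y34 y43 y44)) =
    fromBlocks (reindex f f (fromBlocks y11 (fromCols y13 y14) (fromRows y31 y41)
        (fromBlocks y33 y34 y43 y44))) 0 0 d := by
  ext p q
  rcases p with i | i
  · obtain ⟨u, rfl⟩ := f.surjective i
    rcases q with j | j
    · obtain ⟨v, rfl⟩ := f.surjective j
      rcases u with a | (b | c) <;> rcases v with a' | (b' | c') <;>
        simp [eFull, fromCols, fromRows_apply_inl, fromRows_apply_inr]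
    · rcases u with a | (b | c) <;> simp [eFull, fromCols, fromRows]
  · rcases q with j | j
    · obtain ⟨v, rfl⟩ := f.surjective j
      rcases v with a | (b | c) <;> simp [eFull, fromCols, fromRows]
    · simp [eFull]

end Reindex

section Analytic

lemma transpose_mulVec_ker {n m : ℕ} (B : Matrix (Fin m) (Fin n) ℝ) (hB : B.rank = m) :
    ∀ x : Fin m → ℝ, Bᵀ *ᵥ x = 0 → x = 0 := by
  have hrk : Bᵀ.rank = m := by rw [Matrix.rank_transpose, hB]
  have hrn := LinearMap.finrank_range_add_finrank_ker (Bᵀ.mulVecLin)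
  rw [show Module.finrank ℝ ↥(LinearMap.range Bᵀ.mulVecLin) = Bᵀ.rank from rfl, hrk,
    Module.finrank_fin_fun] at hrn
  have hker : LinearMap.ker Bᵀ.mulVecLin = ⊥ := by
    rw [← Submodule.finrank_eq_zero (R := ℝ)]; omega
  intro x hx
  have hmem : x ∈ LinearMap.ker Bᵀ.mulVecLin := by
    rwa [LinearMap.mem_ker, Matrix.mulVecLin_apply]
  rw [hker, Submodule.mem_bot] at hmem
  exact hmem

lemma sandwich_isUnit {n m : ℕ} {M : Matrix (Fin n) (Fin n) ℝ} {B : Matrix (Fin m) (Fin n) ℝ}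
    (hM : M.PosDef) (hB : B.rank = m) : IsUnit (B * M⁻¹ * Bᵀ) := by
  rw [← Matrix.mulVec_injective_iff_isUnit]
  have key : ∀ z : Fin m → ℝ, (B * M⁻¹ * Bᵀ) *ᵥ z = 0 → z = 0 := by
    intro z hz
    by_contra hzne
    have hBz : Bᵀ *ᵥ z ≠ 0 := fun h => hzne (transpose_mulVec_ker B hB z h)
    have hpos := hM.inv.dotProduct_mulVec_pos hBz
    rw [star_trivial] at hpos
    have hcalc : (Bᵀ *ᵥ z) ⬝ᵥ (M⁻¹ *ᵥ (Bᵀ *ᵥ z)) = z ⬝ᵥ ((B * M⁻¹ * Bᵀ) *ᵥ z) := by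
      rw [← Matrix.mulVec_mulVec, ← Matrix.mulVec_mulVec, Matrix.mulVec_transpose,
        ← dotProduct_mulVec]
    rw [hcalc, hz, dotProduct_zero] at hpos
    exact lt_irrefl 0 hpos
  intro x y hxy
  have := key (x - y) (by rw [Matrix.mulVec_sub, hxy, sub_self])
  exact sub_eq_zero.mp this

end Analytic

/-- The difference-algebraic equation of the SIMPLE scheme has Kronecker index 1: for
sufficiently small `τ`, `(1/τ)M + A` and `S_A = B ((1/τ)M + A)⁻¹ Bᵀ` are invertible, and the
coefficient pair `(ℰ, 𝒜)`, given in 4×4 block form with block sizes `n, m, n, m` by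
`ℰ = [[(1/τ)M, 0, 0, 0], [0, 0, 0, 0], [I, ((1/τ)M + A)⁻¹Bᵀ, -I, 0], [0, -I, 0, I]]` and
`𝒜 = [[0, 0, (1/τ)M + A, Bᵀ], [-B, -S_A, 0, 0], [0, 0, 0, 0], [0, 0, 0, I]]`
(the block `(1/τ)M + A` of size n×n is placed in the n-sized column block, which is the
only dimensionally consistent placement), is equivalent via invertible `P`, `Q` (after
reindexing into blocks of sizes `2n + m` and `m`) to `([[I, 0], [0, 0]], [[J, 0], [0, I]])`. -/
theorem simple_scheme_kronecker_index_one (n m : ℕ)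
    (M A : Matrix (Fin n) (Fin n) ℝ) (B : Matrix (Fin m) (Fin n) ℝ)
    (hM : M.PosDef) (hB : B.rank = m) :
    ∃ τ₀ : ℝ, 0 < τ₀ ∧ ∀ τ : ℝ, 0 < τ → τ < τ₀ →
      IsUnit ((1 / τ) • M + A) ∧
      IsUnit (B * ((1 / τ) • M + A)⁻¹ * Bᵀ) ∧
      ∃ (e : ((Fin n ⊕ Fin m) ⊕ (Fin n ⊕ Fin m)) ≃ (Fin (2 * n + m) ⊕ Fin m))
        (P Q : Matrix (Fin (2 * n + m) ⊕ Fin m) (Fin (2 * n + m) ⊕ Fin m) ℝ)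
        (J : Matrix (Fin (2 * n + m)) (Fin (2 * n + m)) ℝ),
        IsUnit P ∧ IsUnit Q ∧
        P * (reindex e e (fromBlocks
            (fromBlocks ((1 / τ) • M) 0 0 0) (0 : Matrix (Fin n ⊕ Fin m) (Fin n ⊕ Fin m) ℝ)
            (fromBlocks 1 (((1 / τ) • M + A)⁻¹ * Bᵀ) 0 (-1)) (fromBlocks (-1) 0 0 1))) * Q =
          fromBlocks 1 0 0 0 ∧
        P * (reindex e e (fromBlocks
            (fromBlocks 0 0 (-B) (-(B * ((1 / τ) • M + A)⁻¹ * Bᵀ)))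
            (fromBlocks ((1 / τ) • M + A) Bᵀ 0 0)
            (0 : Matrix (Fin n ⊕ Fin m) (Fin n ⊕ Fin m) ℝ) (fromBlocks 0 0 0 1))) * Q =
          fromBlocks J 0 0 1 := by
  have hdetM : M.det ≠ 0 := hM.det_pos.ne'
  have hcontf : Continuous fun τ : ℝ => (M + τ • A).det :=
    (continuous_const.add (continuous_id.smul continuous_const)).matrix_det
  have hcontg : Continuous fun τ : ℝ =>
      (fromBlocks (M + τ • A) Bᵀ B (0 : Matrix (Fin m) (Fin m) ℝ)).det :=
    ((continuous_const.add (continuous_id.smul continuous_const)).matrix_fromBlocks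
      continuous_const continuous_const continuous_const).matrix_det
  have hf0 : (M + (0 : ℝ) • A).det ≠ 0 := by simpa using hdetM
  have hg0 : (fromBlocks (M + (0 : ℝ) • A) Bᵀ B (0 : Matrix (Fin m) (Fin m) ℝ)).det ≠ 0 := by
    letI := M.invertibleOfIsUnitDet (isUnit_iff_ne_zero.mpr hdetM)
    rw [zero_smul, add_zero, Matrix.det_fromBlocks₁₁, Matrix.invOf_eq_nonsing_inv, zero_sub,
      Matrix.det_neg]
    exact mul_ne_zero hdetM (mul_ne_zero (pow_ne_zero _ (by norm_num))
      (((Matrix.isUnit_iff_isUnit_det _).mp (sandwich_isUnit hM hB)).ne_zero))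
  have hev : ∀ᶠ τ : ℝ in nhds 0, (M + τ • A).det ≠ 0 ∧
      (fromBlocks (M + τ • A) Bᵀ B (0 : Matrix (Fin m) (Fin m) ℝ)).det ≠ 0 :=
    (hcontf.continuousAt.eventually_ne hf0).and (hcontg.continuousAt.eventually_ne hg0)
  obtain ⟨ε, hε, hball⟩ := Metric.eventually_nhds_iff.mp hev
  refine ⟨ε, hε, fun τ hτ0 hτε => ?_⟩
  obtain ⟨hfτ, hgτ⟩ := hball (show dist τ 0 < ε by
    rw [Real.dist_eq, sub_zero, abs_of_pos hτ0]; exact hτε)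
  have hτne : τ ≠ 0 := hτ0.ne'
  have hNdet : IsUnit (M + τ • A).det := isUnit_iff_ne_zero.mpr hfτ
  have hCN : (1 / τ) • M + A = (1 / τ) • (M + τ • A) := by
    rw [smul_add, smul_smul, one_div, inv_mul_cancel₀ hτne, one_smul]
  have hC : IsUnit ((1 / τ) • M + A) := by
    rw [Matrix.isUnit_iff_isUnit_det, hCN, Matrix.det_smul, isUnit_iff_ne_zero]
    exact mul_ne_zero (pow_ne_zero _ (one_div_ne_zero hτne)) hfτ
  have hCdet : IsUnit ((1 / τ) • M + A).det := (Matrix.isUnit_iff_isUnit_det _).mp hC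
  have hCinv : ((1 / τ) • M + A)⁻¹ = τ • (M + τ • A)⁻¹ := by
    apply Matrix.inv_eq_right_inv
    rw [hCN, Matrix.smul_mul, Matrix.mul_smul, smul_smul, Matrix.mul_nonsing_inv _ hNdet,
      one_div, inv_mul_cancel₀ hτne, one_smul]
  letI := (M + τ • A).invertibleOfIsUnitDet hNdet
  have hdetBNB : (B * (M + τ • A)⁻¹ * Bᵀ).det ≠ 0 := by
    intro h0
    apply hgτ
    rw [Matrix.det_fromBlocks₁₁, Matrix.invOf_eq_nonsing_inv, zero_sub, Matrix.det_neg, h0]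
    ring
  have hSrel : B * ((1 / τ) • M + A)⁻¹ * Bᵀ = τ • (B * (M + τ • A)⁻¹ * Bᵀ) := by
    rw [hCinv, Matrix.mul_smul, Matrix.smul_mul]
  have hS : IsUnit (B * ((1 / τ) • M + A)⁻¹ * Bᵀ) := by
    rw [Matrix.isUnit_iff_isUnit_det, hSrel, Matrix.det_smul, isUnit_iff_ne_zero]
    exact mul_ne_zero (pow_ne_zero _ hτne) hdetBNB
  have hSdet : IsUnit (B * ((1 / τ) • M + A)⁻¹ * Bᵀ).det :=
    (Matrix.isUnit_iff_isUnit_det _).mp hS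
  refine ⟨hC, hS, ?_⟩
  have hW : IsUnit ((1 / τ) • M).det := by
    rw [Matrix.det_smul, isUnit_iff_ne_zero]
    exact mul_ne_zero (pow_ne_zero _ (one_div_ne_zero hτne)) hdetM
  set C := (1 / τ) • M + A with hCdef
  set W := (1 / τ) • M with hWdef
  set t := W⁻¹ with htdef
  set Si := (B * C⁻¹ * Bᵀ)⁻¹ with hSidef
  have h1 : t * W = 1 := Matrix.nonsing_inv_mul _ hW
  have h2 : C * C⁻¹ = 1 := Matrix.mul_nonsing_inv _ hCdet
  have h3 : Si * (B * C⁻¹ * Bᵀ) = 1 := Matrix.nonsing_inv_mul _ hSdet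
  set f : (Fin n ⊕ (Fin n ⊕ Fin m)) ≃ Fin (2 * n + m) :=
    (Equiv.sumCongr (Equiv.refl (Fin n)) finSumFinEquiv).trans
      (finSumFinEquiv.trans (finCongr (by ring))) with hfdef
  refine ⟨eFull f, reindex (eFull f) (eFull f) (Pcore t B Si),
    reindex (eFull f) (eFull f) (Qcore C⁻¹ B Si),
    reindex f f (fromBlocks (-(t * Bᵀ * (Si * B)) - t * Bᵀ * (Si * B))
      (fromCols (t * C) (t * Bᵀ))
      (fromRows (-(t * Bᵀ * (Si * B)) - t * Bᵀ * (Si * B)) (-(Si * B)))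
      (fromBlocks (t * C) (t * Bᵀ) 0 1)), ?_, ?_, ?_, ?_⟩
  · exact (corePunit W C⁻¹ t B Si h1 h3).map (Matrix.reindexAlgEquiv ℝ ℝ (eFull f))
  · exact (coreQunit C⁻¹ B Si).map (Matrix.reindexAlgEquiv ℝ ℝ (eFull f))
  · rw [Matrix.reindex_apply, Matrix.reindex_apply, Matrix.reindex_apply,
      Matrix.submatrix_mul_equiv, Matrix.submatrix_mul_equiv, coreE W C⁻¹ t B Si h1,
      ← Matrix.reindex_apply]
    have hE := reindex_eFull f 1 0 0 0 1 0 0 0 1 0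
    simp only [Matrix.fromBlocks_zero, Matrix.fromBlocks_one, Matrix.fromCols_zero,
      Matrix.fromRows_zero] at hE
    rw [hE, Matrix.reindex_apply, Matrix.submatrix_one_equiv]
  · rw [Matrix.reindex_apply, Matrix.reindex_apply, Matrix.reindex_apply,
      Matrix.submatrix_mul_equiv, Matrix.submatrix_mul_equiv, coreA C C⁻¹ t B Si h2 h3,
      ← Matrix.reindex_apply]
    exact reindex_eFull f (-(t * Bᵀ * (Si * B)) - t * Bᵀ * (Si * B)) (t * C) (t * Bᵀ)
      (-(t * Bᵀ * (Si * B)) - t * Bᵀ * (Si * B)) (t * C) (t * Bᵀ) (-(Si * B)) 0 1 1
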